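/- The exterior differential is consistent with the Cartan filtration: if ω ∈ Ω^r is a p-Cartan form (0 ≤ p ≤ r), then dω is a p-Cartan form in Ω^{r+1}. -/
import Mathlib


/-- The raw Cartan formula for the exterior differential: for an `r`-argument map
`ω : 𝔇^r → A` on the derivations `𝔇 = Der_𝔽(A)`, `cartanD ω : 𝔇^{r+1} → A` is
`dω(X_0,…,X_r) = (r+1)⁻¹ ( Σ_s (−1)^s X_s (ω(X_0,…,X̂_s,…,X_r))
  + Σ_{s<t} (−1)^{s+t} ω(⁅X_s,X_t⁆, X_0,…,X̂_s,…,X̂_t,…,X_r) )`. -/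
noncomputable def cartanD {𝔽 : Type*} [Field 𝔽] [CharZero 𝔽]
    {A : Type*} [CommRing A] [Algebra 𝔽 A] {r : ℕ}
    (ω : (Fin r → Derivation 𝔽 A A) → A) :
    (Fin (r + 1) → Derivation 𝔽 A A) → A :=
  fun X =>
    ((r + 1 : 𝔽))⁻¹ • (
      (∑ s : Fin (r + 1), (-1 : A) ^ (s : ℕ) * X s (ω (s.removeNth X))) +
      ∑ s : Fin (r + 1), ∑ t : Fin (r + 1),
        if s < t then
          (-1 : A) ^ ((s : ℕ) + (t : ℕ)) *
            ω (fun u : Fin r =>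
              if (u : ℕ) = 0 then ⁅X s, X t⁆
              else X ⟨if (u : ℕ) - 1 < (s : ℕ) then (u : ℕ) - 1
                      else if (u : ℕ) < (t : ℕ) then (u : ℕ) else (u : ℕ) + 1,
                      by have h1 := u.isLt; split
                         · omega
                         · split <;> omega⟩)
        else 0)

/-- The interior product `i_X ω (X_1,…,X_{r-1}) = r · ω(X, X_1,…,X_{r-1})` (raw form). -/
def iProdRaw {𝔽 : Type*} [Field 𝔽] [CharZero 𝔽]
    {A : Type*} [CommRing A] [Algebra 𝔽 A] {r : ℕ}
    (X : Derivation 𝔽 A A) (ω : (Fin r → Derivation 𝔽 A A) → A) :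
    (Fin (r - 1) → Derivation 𝔽 A A) → A :=
  fun Y => (r : A) * ω (fun u => if h : (u : ℕ) = 0 then X
    else Y ⟨(u : ℕ) - 1, by have h1 := u.isLt; omega⟩)

/-- The Lie derivative
`L_X ω (X_1,…,X_r) = X (ω (X_1,…,X_r)) − Σ_s ω(X_1,…,⁅X,X_s⁆,…,X_r)` (raw form). -/
def lieDerivRaw {𝔽 : Type*} [Field 𝔽] [CharZero 𝔽]
    {A : Type*} [CommRing A] [Algebra 𝔽 A] {r : ℕ}
    (X : Derivation 𝔽 A A) (ω : (Fin r → Derivation 𝔽 A A) → A) :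
    (Fin r → Derivation 𝔽 A A) → A :=
  fun Y => X (ω Y) - ∑ s : Fin r, ω (Function.update Y s ⁅X, Y s⁆)

/-- `ω : 𝔇^r → A` is a `p`-Cartan form (w.r.t. the Cartan subalgebra `𝒟`) if
`ω(X_1,…,X_r) = 0` whenever at least `r - p + 1` of the arguments belong to `𝒟`. -/
def IsPCartan {𝔽 : Type*} [Field 𝔽] [CharZero 𝔽]
    {A : Type*} [CommRing A] [Algebra 𝔽 A] {r : ℕ}
    (𝒟 : Submodule A (Derivation 𝔽 A A)) (p : ℕ)
    (ω : (Fin r → Derivation 𝔽 A A) → A) : Prop :=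
  ∀ (Y : Fin r → Derivation 𝔽 A A) (S : Finset (Fin r)),
    r - p + 1 ≤ S.card → (∀ s ∈ S, Y s ∈ 𝒟) → ω Y = 0


/-- The index map used inside `cartanD`'s bracket term. -/
def cartanIdx {r : ℕ} (s t : Fin (r+1)) (u : Fin r) : Fin (r+1) :=
  ⟨if (u : ℕ) - 1 < (s : ℕ) then (u : ℕ) - 1
    else if (u : ℕ) < (t : ℕ) then (u : ℕ) else (u : ℕ) + 1,
   by have h1 := u.isLt; split
      · omega
      · split <;> omega⟩

theorem cartanIdx_val {r : ℕ} (s t : Fin (r+1)) (v : ℕ) (hv : v < r) :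
    ((cartanIdx s t ⟨v, hv⟩ : Fin (r+1)) : ℕ) =
      if v - 1 < (s : ℕ) then v - 1 else if v < (t : ℕ) then v else v + 1 := rfl

/-- The exterior differential is consistent with the Cartan filtration:
if `ω ∈ Ω^r` is a `p`-Cartan form (`0 ≤ p ≤ r`) with respect to a Cartan subalgebra
`𝒟 ⊆ 𝔇` (an `A`-submodule closed under the bracket), then `dω` is a `p`-Cartan form in
`Ω^{r+1}`. -/
theorem cartanD_preserves_cartan_filtration {𝔽 : Type*} [Field 𝔽] [CharZero 𝔽]
    {A : Type*} [CommRing A] [Algebra 𝔽 A]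
    (𝒟 : Submodule A (Derivation 𝔽 A A))
    (h𝒟 : ∀ X ∈ 𝒟, ∀ Y ∈ 𝒟, ⁅X, Y⁆ ∈ 𝒟)
    (r p : ℕ) (hpr : p ≤ r)
    (ω : AlternatingMap A (Derivation 𝔽 A A) A (Fin r))
    (hω : IsPCartan 𝒟 p (⇑ω)) :
    IsPCartan 𝒟 p (cartanD (⇑ω)) := by
  intro Y S hcard hS
  classical
  have hScard : r - p + 2 ≤ S.card := by omega
  have h1 : ∀ s : Fin (r+1), ω (s.removeNth Y) = 0 := by
    intro s
    set T := Finset.univ.filter (fun u : Fin r => Y (s.succAbove u) ∈ 𝒟) with hT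
    have hsurj : Set.SurjOn (fun u : Fin r => s.succAbove u) ↑T ↑(S.erase s) := by
      intro x hx
      rw [Finset.mem_coe, Finset.mem_erase] at hx
      obtain ⟨u, hu⟩ := Fin.exists_succAbove_eq hx.1
      refine ⟨u, Finset.mem_coe.mpr ?_, hu⟩
      rw [hT, Finset.mem_filter]
      exact ⟨Finset.mem_univ _, by rw [hu]; exact hS x hx.2⟩
    have h3 := Finset.card_le_card_of_surjOn _ hsurj
    have h4 := Finset.pred_card_le_card_erase (s := S) (a := s)
    apply hω _ T (by omega)
    intro u hu
    rw [hT, Finset.mem_filter] at hu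
    exact hu.2
  have h2 : ∀ s t : Fin (r+1), s < t →
      ω (fun u : Fin r => if (u : ℕ) = 0 then ⁅Y s, Y t⁆ else Y (cartanIdx s t u)) = 0 := by
    intro s t hst
    classical
    have hScard : r - p + 2 ≤ S.card := by omega
    have hstn : (s : ℕ) < (t : ℕ) := hst
    have htn : (t : ℕ) < r + 1 := t.isLt
    have hr : 0 < r := by omega
    set Z : Fin r → Derivation 𝔽 A A :=
      fun u : Fin r => if (u : ℕ) = 0 then ⁅Y s, Y t⁆ else Y (cartanIdx s t u) with hZ
    set T : Finset (Fin r) := Finset.univ.filter (fun u => Z u ∈ 𝒟) with hT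
    set E : Finset (Fin (r+1)) := (S.erase s).erase t with hEdef
    have hEcard : S.card - 2 ≤ E.card := by
      have h1 := Finset.pred_card_le_card_erase (s := S) (a := s)
      have h2 := Finset.pred_card_le_card_erase (s := S.erase s) (a := t)
      rw [← hEdef] at h2
      omega
    -- surjectivity from T.erase 0 onto E
    have hsurj : Set.SurjOn (fun u : Fin r => if (u : ℕ) = 0 then s else cartanIdx s t u)
        ↑(T.erase ⟨0, hr⟩) ↑E := by
      intro x hx
      have hx' : x ∈ (S.erase s).erase t := by rw [← hEdef]; exact Finset.mem_coe.mp hx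
      rw [Finset.mem_erase, Finset.mem_erase] at hx'
      obtain ⟨hxt, hxs, hxS⟩ := hx'
      have hxtn : (x : ℕ) ≠ (t : ℕ) := fun h => hxt (Fin.ext h)
      have hxsn : (x : ℕ) ≠ (s : ℕ) := fun h => hxs (Fin.ext h)
      have hxn : (x : ℕ) < r + 1 := x.isLt
      obtain ⟨v, hv, hv0, hvx⟩ : ∃ v, ∃ _ : v < r, v ≠ 0 ∧
          (if v - 1 < (s : ℕ) then v - 1 else if v < (t : ℕ) then v else v + 1) = (x : ℕ) := by
        by_cases h1 : (x : ℕ) < (s : ℕ)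
        · exact ⟨(x : ℕ) + 1, by omega, by omega, by split_ifs <;> omega⟩
        · by_cases h2 : (x : ℕ) < (t : ℕ)
          · exact ⟨(x : ℕ), by omega, by omega, by split_ifs <;> omega⟩
          · exact ⟨(x : ℕ) - 1, by omega, by omega, by split_ifs <;> omega⟩
      have hG : cartanIdx s t ⟨v, hv⟩ = x := Fin.ext (by rw [cartanIdx_val]; exact hvx)
      have hZv : Z ⟨v, hv⟩ = Y x := by
        show (if v = 0 then ⁅Y s, Y t⁆ else Y (cartanIdx s t ⟨v, hv⟩)) = Y x
        rw [if_neg hv0, hG]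
      refine ⟨⟨v, hv⟩, ?_, ?_⟩
      · refine Finset.mem_coe.mpr (Finset.mem_erase.mpr ⟨fun h => hv0 (congrArg Fin.val h), ?_⟩)
        rw [hT, Finset.mem_filter]
        exact ⟨Finset.mem_univ _, by rw [hZv]; exact hS x hxS⟩
      · show (if v = 0 then s else cartanIdx s t ⟨v, hv⟩) = x
        rw [if_neg hv0, hG]
    have hcardTE : E.card ≤ (T.erase ⟨0, hr⟩).card :=
      Finset.card_le_card_of_surjOn _ hsurj
    have hTcard : r - p + 1 ≤ T.card := by
      by_cases hb : s ∈ S ∧ t ∈ S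
      · have h0T : (⟨0, hr⟩ : Fin r) ∈ T := by
          simp only [hT, Finset.mem_filter, Finset.mem_univ, true_and]
          show Z _ ∈ 𝒟
          simp only [hZ]
          exact h𝒟 _ (hS s hb.1) _ (hS t hb.2)
        have := Finset.card_erase_add_one h0T
        omega
      · have hE1 : S.card - 1 ≤ E.card := by
          rcases Classical.em (s ∈ S) with hsS | hsS
          · have htS : t ∉ S := fun h => hb ⟨hsS, h⟩
            have : E = S.erase s := by
              rw [hEdef, Finset.erase_eq_of_notMem]
              simp [Finset.mem_erase, htS]
            rw [this]
            exact Finset.pred_card_le_card_erase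
          · have : (S.erase s) = S := Finset.erase_eq_of_notMem hsS
            rw [hEdef, this]
            have := Finset.pred_card_le_card_erase (s := S) (a := t)
            omega
        have := Finset.card_erase_le (s := T) (a := (⟨0, hr⟩ : Fin r))
        omega
    apply hω Z T hTcard
    intro u hu
    rw [hT, Finset.mem_filter] at hu
    exact hu.2
  show ((r + 1 : 𝔽))⁻¹ • _ = 0
  convert smul_zero ((r + 1 : 𝔽))⁻¹ using 2
  rw [Finset.sum_eq_zero fun s _ => by rw [h1 s, map_zero, mul_zero], zero_add]
  apply Finset.sum_eq_zero; intro s _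
  apply Finset.sum_eq_zero; intro t _
  split
  · exact mul_eq_zero_of_right _ (h2 s t (by assumption))
  · rfl
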